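/- Let (T, C, X) be random elements with T, C ≥ 0, T and C conditionally independent given X, S_c(t, X) = P(C ≥ t | X), and suppose the conditional survival function P(T ≥ t | X) equals S(t, βᵀX), a measurable function of the index βᵀX alone. Let X_l be an integrable subvector of X. Then for every t, E[ X_l · I(T ≥ t) · I(C ≥ t) | βᵀX ] = S(t, βᵀX) · E[ X_l · S_c(t, X) | βᵀX ] almost surely; in particular (taking X_l ≡ 1), E[ I(T ≥ t) I(C ≥ t) | βᵀX ] = S(t, βᵀX) · E[ S_c(t, X) | βᵀX ] almost surely. -/

import Mathlib

open MeasureTheory Set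

/-- the σ-algebra generated by a random element. -/
def sigmaGen {Ω α : Type*} [MeasurableSpace α] (X : Ω → α) : MeasurableSpace Ω :=
  MeasurableSpace.comap X inferInstance

/-- conditional expectation given a sub-σ-algebra, as a function. -/
noncomputable def cE {Ω : Type*} [MeasurableSpace Ω] {E : Type*} [NormedAddCommGroup E]
    [NormedSpace ℝ E] [CompleteSpace E]
    (μ : Measure Ω) (m : MeasurableSpace Ω) (f : Ω → E) : Ω → E :=
  μ[f | m]

/-- With `T ⊥ C | X`, `S_c(t, X) = P(C ≥ t | X)`, and
`P(T ≥ t | X) = S(t, βᵀX)` a measurable function of the index `βᵀX` alone, for any integrable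
(σ(X)-measurable) subvector component `X_l` of `X` and every `t`:
`E[X_l · I(T ≥ t) · I(C ≥ t) | βᵀX] = S(t, βᵀX) · E[X_l · S_c(t, X) | βᵀX]` a.s.;
in particular (taking `X_l ≡ 1`),
`E[I(T ≥ t) I(C ≥ t) | βᵀX] = S(t, βᵀX) · E[S_c(t, X) | βᵀX]` a.s. -/
lemma aux_factor {Ω : Type*} [m0 : MeasurableSpace Ω] (μ : Measure Ω) [IsProbabilityMeasure μ]
    (mV mX : MeasurableSpace Ω) (hVX : mV ≤ mX) (hX0 : mX ≤ m0)
    (IT IC : Ω → ℝ) (hITm : Measurable[m0] IT) (hICm : Measurable[m0] IC)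
    (hITb : ∀ ω, ‖IT ω‖ ≤ 1) (hICb : ∀ ω, ‖IC ω‖ ≤ 1)
    (σ' : Ω → ℝ) (hσm : StronglyMeasurable[mV] σ')
    (hTC : (μ[(fun ω => IT ω * IC ω) | mX]) =ᵐ[μ] fun ω => (μ[IT | mX]) ω * ((μ[IC | mX])) ω)
    (hS : μ[IT | mX] =ᵐ[μ] σ')
    (Xl : Ω → ℝ) (hXlm : StronglyMeasurable[mX] Xl) (hXlint : Integrable Xl μ) :
    μ[(fun ω => Xl ω * IT ω * IC ω) | mV] =ᵐ[μ]
      fun ω => σ' ω * (μ[(fun ω' => Xl ω' * (μ[IC | mX]) ω') | mV]) ω := by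
  have hV0 : mV ≤ m0 := hVX.trans hX0
  have hICint : Integrable IC μ := by
    have := Integrable.bdd_mul (c := 1) (μ := μ) (f := IC) (integrable_const (1:ℝ))
      hICm.aestronglyMeasurable (Filter.Eventually.of_forall hICb)
    simpa using this
  have hprod : Integrable (fun ω => IT ω * IC ω) μ :=
    Integrable.bdd_mul hICint hITm.aestronglyMeasurable (Filter.Eventually.of_forall hITb)
  have hXlprod : Integrable (fun ω => Xl ω * (IT ω * IC ω)) μ := by
    refine Integrable.mono' hXlint.norm ?_ (Filter.Eventually.of_forall fun ω => ?_)
    · exact hXlint.aestronglyMeasurable.mul hprod.aestronglyMeasurable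
    · calc ‖Xl ω * (IT ω * IC ω)‖ = ‖Xl ω‖ * ‖IT ω * IC ω‖ := norm_mul _ _
        _ ≤ ‖Xl ω‖ * 1 := by
            refine mul_le_mul_of_nonneg_left ?_ (norm_nonneg _)
            calc ‖IT ω * IC ω‖ = ‖IT ω‖ * ‖IC ω‖ := norm_mul _ _
              _ ≤ 1 * 1 := mul_le_mul (hITb ω) (hICb ω) (norm_nonneg _) zero_le_one
              _ = 1 := one_mul _
        _ = ‖Xl ω‖ := mul_one _
  -- bound on conditional expectation of IC
  have hEbd : ∀ᵐ ω ∂μ, ‖(μ[IC | mX]) ω‖ ≤ 1 := by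
    have hub : (μ[IC | mX]) ≤ᵐ[μ] (μ[(fun _ => (1:ℝ)) | mX]) :=
      condExp_mono hICint (integrable_const 1)
        (Filter.Eventually.of_forall fun ω => (abs_le.mp (hICb ω)).2)
    have hlb : (μ[(fun _ => (-1:ℝ)) | mX]) ≤ᵐ[μ] (μ[IC | mX]) :=
      condExp_mono (integrable_const _) hICint
        (Filter.Eventually.of_forall fun ω => (abs_le.mp (hICb ω)).1)
    rw [condExp_const hX0] at hub
    rw [condExp_const hX0] at hlb
    filter_upwards [hub, hlb] with ω h1 h2
    rw [Real.norm_eq_abs, abs_le]; exact ⟨h2, h1⟩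
  have hE := integrable_condExp (f := IC) (m := mX) (μ := μ)
  have hXlE : Integrable (fun ω => Xl ω * (μ[IC | mX]) ω) μ := by
    refine Integrable.mono' hXlint.norm
      (hXlint.aestronglyMeasurable.mul hE.aestronglyMeasurable) ?_
    filter_upwards [hEbd] with ω hb
    calc ‖Xl ω * (μ[IC | mX]) ω‖ = ‖Xl ω‖ * ‖(μ[IC | mX]) ω‖ := norm_mul _ _
      _ ≤ ‖Xl ω‖ * 1 := mul_le_mul_of_nonneg_left hb (norm_nonneg _)
      _ = ‖Xl ω‖ := mul_one _
  -- step 2: pull Xl out at level mX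
  have step2 : μ[(fun ω => Xl ω * (IT ω * IC ω)) | mX] =ᵐ[μ]
      fun ω => Xl ω * (μ[(fun ω' => IT ω' * IC ω') | mX]) ω := by
    have := condExp_mul_of_stronglyMeasurable_left (μ := μ) (m := mX)
      hXlm hXlprod hprod
    exact this
  -- step 3: inner condexp factorization
  have step3 : μ[(fun ω => Xl ω * (IT ω * IC ω)) | mX] =ᵐ[μ]
      fun ω => σ' ω * (Xl ω * (μ[IC | mX]) ω) := by
    filter_upwards [step2, hTC, hS] with ω h2 htc hs
    rw [h2, htc, hs]; ring
  have hσXlE : Integrable (fun ω => σ' ω * (Xl ω * (μ[IC | mX]) ω)) μ :=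
    Integrable.congr integrable_condExp step3
  -- tower + pull out σ'
  have tower : μ[(fun ω => Xl ω * IT ω * IC ω) | mV] =ᵐ[μ]
      μ[(μ[(fun ω => Xl ω * IT ω * IC ω) | mX]) | mV] :=
    (condExp_condExp_of_le hVX hX0).symm
  have step4 : μ[(μ[(fun ω => Xl ω * IT ω * IC ω) | mX]) | mV] =ᵐ[μ]
      μ[(fun ω => σ' ω * (Xl ω * (μ[IC | mX]) ω)) | mV] := by
    refine condExp_congr_ae ?_
    refine (condExp_congr_ae (g := fun ω => Xl ω * (IT ω * IC ω))
      (Filter.Eventually.of_forall fun ω => mul_assoc _ _ _)).trans step3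
  have step5 : μ[(fun ω => σ' ω * (Xl ω * (μ[IC | mX]) ω)) | mV] =ᵐ[μ]
      fun ω => σ' ω * (μ[(fun ω' => Xl ω' * (μ[IC | mX]) ω') | mV]) ω := by
    have := condExp_mul_of_stronglyMeasurable_left (μ := μ) (m := mV)
      hσm hσXlE hXlE
    exact this
  exact tower.trans (step4.trans step5)

theorem condexp_factorization_through_index
    {Ω : Type*} [MeasurableSpace Ω] (μ : Measure Ω) [IsProbabilityMeasure μ]
    {p d : ℕ} (X : Ω → Fin p → ℝ) (T C : Ω → ℝ)
    (β : Matrix (Fin p) (Fin d) ℝ)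
    (hX : Measurable X) (hT : Measurable T) (hC : Measurable C)
    (hTnn : ∀ ω, 0 ≤ T ω) (hCnn : ∀ ω, 0 ≤ C ω)
    -- the index V = βᵀX
    (V : Ω → Fin d → ℝ) (hV : ∀ ω, V ω = Matrix.vecMul (X ω) β)
    (hVmeas : Measurable V)
    -- conditional independence of T and C given X
    (hTC : ∀ s t : ℝ,
      cE μ (sigmaGen X)
          (fun ω => (if s ≤ T ω then (1:ℝ) else 0) * (if t ≤ C ω then (1:ℝ) else 0))
        =ᵐ[μ]
      fun ω =>
        cE μ (sigmaGen X) (fun ω' => if s ≤ T ω' then (1:ℝ) else 0) ω *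
        cE μ (sigmaGen X) (fun ω' => if t ≤ C ω' then (1:ℝ) else 0) ω)
    -- the conditional survival of T given X depends on X only through βᵀX
    (S : ℝ → (Fin d → ℝ) → ℝ) (hSmeas : Measurable (Function.uncurry S))
    (hS : ∀ t : ℝ,
      cE μ (sigmaGen X) (fun ω => if t ≤ T ω then (1:ℝ) else 0)
        =ᵐ[μ] fun ω => S t (V ω))
    -- an integrable subvector component of X
    (Xl : Ω → ℝ) (hXlmeas : Measurable[sigmaGen X] Xl) (hXlint : Integrable Xl μ) :
    ∀ t : ℝ,
      (cE μ (sigmaGen V)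
          (fun ω => Xl ω * (if t ≤ T ω then (1:ℝ) else 0) * (if t ≤ C ω then (1:ℝ) else 0))
        =ᵐ[μ]
       fun ω => S t (V ω) *
         cE μ (sigmaGen V)
           (fun ω' => Xl ω' * cE μ (sigmaGen X) (fun ω'' => if t ≤ C ω'' then (1:ℝ) else 0) ω')
           ω)
      ∧
      (cE μ (sigmaGen V)
          (fun ω => (if t ≤ T ω then (1:ℝ) else 0) * (if t ≤ C ω then (1:ℝ) else 0))
        =ᵐ[μ]
       fun ω => S t (V ω) *
         cE μ (sigmaGen V)
           (fun ω' => cE μ (sigmaGen X) (fun ω'' => if t ≤ C ω'' then (1:ℝ) else 0) ω')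
           ω) := by
  intro t
  have hX0 : sigmaGen X ≤ ‹MeasurableSpace Ω› := hX.comap_le
  -- V = g ∘ X
  have hg : Measurable (fun x : Fin p → ℝ => Matrix.vecMul x β) := by
    refine measurable_pi_lambda _ fun j => ?_
    simp only [Matrix.vecMul, dotProduct]
    exact Finset.measurable_sum _ fun i _ => (measurable_pi_apply i).mul_const _
  have hVX : sigmaGen V ≤ sigmaGen X := by
    have hVeq : V = (fun x => Matrix.vecMul x β) ∘ X := funext fun ω => hV ω
    rw [sigmaGen, hVeq, ← MeasurableSpace.comap_comp]
    exact MeasurableSpace.comap_mono hg.comap_le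
  set IT : Ω → ℝ := fun ω => if t ≤ T ω then (1:ℝ) else 0 with hIT
  set IC : Ω → ℝ := fun ω => if t ≤ C ω then (1:ℝ) else 0 with hIC
  have hITm : Measurable IT := Measurable.ite (measurableSet_le measurable_const hT)
    measurable_const measurable_const
  have hICm : Measurable IC := Measurable.ite (measurableSet_le measurable_const hC)
    measurable_const measurable_const
  have hITb : ∀ ω, ‖IT ω‖ ≤ 1 := fun ω => by
    simp only [hIT]; split <;> simp
  have hICb : ∀ ω, ‖IC ω‖ ≤ 1 := fun ω => by
    simp only [hIC]; split <;> simp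
  have hσm : StronglyMeasurable[sigmaGen V] (fun ω => S t (V ω)) := by
    have hSt : Measurable (S t) := by
      have : (S t) = fun v => Function.uncurry S (t, v) := rfl
      rw [this]; exact hSmeas.comp measurable_prodMk_left
    exact (hSt.comp (Measurable.of_comap_le le_rfl)).stronglyMeasurable
  have hTC' := hTC t t
  have hS' := hS t
  constructor
  · exact aux_factor μ (sigmaGen V) (sigmaGen X) hVX hX0 IT IC hITm hICm hITb hICb
      _ hσm hTC' hS' Xl hXlmeas.stronglyMeasurable hXlint
  · have := aux_factor μ (sigmaGen V) (sigmaGen X) hVX hX0 IT IC hITm hICm hITb hICb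
      _ hσm hTC' hS' (fun _ => 1) stronglyMeasurable_const (integrable_const 1)
    simp only [one_mul] at this; exact this
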